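/- Let A ⊆ ℝ^d and h ∈ 𝒟. If P_0^h(A) = 0, then there exists f ∈ 𝒟 with f ≺ h such that P_0^f(A) < +∞. -/

import Mathlib

open Set Metric Filter Topology
open scoped ENNReal

/-- `h` is a dimension function: continuous and nondecreasing on `(0,∞)`, positive
there, and tending to `0` as `t → 0⁺`. -/
def IsDimFun (h : ℝ → ℝ) : Prop :=
  ContinuousOn h (Ioi 0) ∧ MonotoneOn h (Ioi 0) ∧ (∀ t, 0 < t → 0 < h t) ∧
    Tendsto h (𝓝[>] (0:ℝ)) (𝓝 0)

/-- `g ≺ h` : `g` is a smaller dimension than `h`, i.e. `lim_{t→0⁺} h(t)/g(t) = 0`. -/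
def DimLT (g h : ℝ → ℝ) : Prop :=
  Tendsto (fun t => h t / g t) (𝓝[>] (0:ℝ)) (𝓝 0)

/-- `h ∈ 𝒟_d`: `h` is a doubling, at most `d`-dimensional dimension function. -/
def IsDimFunD (d : ℕ) (h : ℝ → ℝ) : Prop :=
  IsDimFun h ∧ (∃ c₀ > (0:ℝ), ∀ t > (0:ℝ), t ^ d ≤ c₀ * h t) ∧
    ∃ c₁ > (0:ℝ), ∀ t > (0:ℝ), h (2 * t) ≤ c₁ * h t

/-- `P_δ^h(E)`: supremum of `∑ h(|Bᵢ|)` over countable `δ`-packings of `E`, where a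
`δ`-packing is a countable collection of pairwise disjoint open balls centered at
points of `E` with diameters (`= 2r`) less than `δ`. -/
noncomputable def packingPre (d : ℕ) (h : ℝ → ℝ) (δ : ℝ)
    (E : Set (EuclideanSpace ℝ (Fin d))) : ℝ≥0∞ :=
  ⨆ (c : ℕ → EuclideanSpace ℝ (Fin d)) (r : ℕ → ℝ) (s : Set ℕ)
    (_ : ∀ i ∈ s, c i ∈ E) (_ : ∀ i ∈ s, 0 < r i) (_ : ∀ i ∈ s, 2 * r i < δ)
    (_ : s.PairwiseDisjoint fun i => ball (c i) (r i)),
    ∑' i : s, ENNReal.ofReal (h (2 * r (i : ℕ)))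

/-- The packing premeasure `P_0^h(E) = inf_{δ>0} P_δ^h(E)`. -/
noncomputable def packingPre0 (d : ℕ) (h : ℝ → ℝ)
    (E : Set (EuclideanSpace ℝ (Fin d))) : ℝ≥0∞ :=
  ⨅ (δ : ℝ) (_ : 0 < δ), packingPre d h δ E

/-- The packing measure `𝒫^h(E)`. -/
noncomputable def packingMeasure (d : ℕ) (h : ℝ → ℝ)
    (E : Set (EuclideanSpace ℝ (Fin d))) : ℝ≥0∞ :=
  ⨅ (F : ℕ → Set (EuclideanSpace ℝ (Fin d))) (_ : E ⊆ ⋃ j, F j),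
    ∑' j, packingPre0 d h (F j)

/-- `E` has non-σ-finite `𝒫^h` measure: `E` is not a countable union of sets of
finite `𝒫^h` measure. -/
def NonSigmaFinitePacking (d : ℕ) (h : ℝ → ℝ)
    (E : Set (EuclideanSpace ℝ (Fin d))) : Prop :=
  ¬ ∃ F : ℕ → Set (EuclideanSpace ℝ (Fin d)),
      E ⊆ ⋃ j, F j ∧ ∀ j, packingMeasure d h (F j) < ⊤

/-- `A ⊆ ℝ^d` is analytic: a continuous image of `ℕ^ℕ`. -/
def IsAnalyticSet' (d : ℕ) (A : Set (EuclideanSpace ℝ (Fin d))) : Prop :=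
  ∃ φ : (ℕ → ℕ) → EuclideanSpace ℝ (Fin d), Continuous φ ∧ A = Set.range φ

private lemma packing_sum_le_pre (d : ℕ) (h : ℝ → ℝ) (δ : ℝ)
    (E : Set (EuclideanSpace ℝ (Fin d)))
    (c : ℕ → EuclideanSpace ℝ (Fin d)) (r : ℕ → ℝ) (s : Set ℕ)
    (h1 : ∀ i ∈ s, c i ∈ E) (h2 : ∀ i ∈ s, 0 < r i) (h3 : ∀ i ∈ s, 2 * r i < δ)
    (h4 : s.PairwiseDisjoint fun i => ball (c i) (r i)) :
    (∑' i : s, ENNReal.ofReal (h (2 * r (i : ℕ)))) ≤ packingPre d h δ E :=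
  le_iSup_of_le c <| le_iSup_of_le r <| le_iSup_of_le s <| le_iSup_of_le h1 <|
    le_iSup_of_le h2 <| le_iSup_of_le h3 <| le_iSup_of_le h4 le_rfl

private lemma packingPre_mono_delta (d : ℕ) (h : ℝ → ℝ) {δ' δ : ℝ} (hδ : δ' ≤ δ)
    (E : Set (EuclideanSpace ℝ (Fin d))) :
    packingPre d h δ' E ≤ packingPre d h δ E := by
  refine iSup_le fun c => iSup_le fun r => iSup_le fun s => iSup_le fun h1 =>
    iSup_le fun h2 => iSup_le fun h3 => iSup_le fun h4 => ?_
  exact packing_sum_le_pre d h δ E c r s h1 h2 (fun i hi => lt_of_lt_of_le (h3 i hi) hδ) h4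


/-- if the `h`-prepacking measure vanishes, there is `f ≺ h` with
finite `f`-prepacking measure. -/
theorem prepacking_finite_down (d : ℕ) (h : ℝ → ℝ) (hh : IsDimFun h)
    (A : Set (EuclideanSpace ℝ (Fin d))) (hA : packingPre0 d h A = 0) :
    ∃ f : ℝ → ℝ, IsDimFun f ∧ DimLT f h ∧ packingPre0 d f A < ⊤ := by
  classical
  obtain ⟨hcont, hmono, hpos, hlim⟩ := hh
  -- Step 1: key scale selection
  have key : ∀ (ε : ℝ≥0∞) (β γ : ℝ), 0 < ε → 0 < β → 0 < γ →
      ∃ t : ℝ, 0 < t ∧ t < γ ∧ packingPre d h t A ≤ ε ∧ h t ≤ β := by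
    intro ε β γ hε hβ hγ
    have h0 : packingPre0 d h A < ε := by rw [hA]; exact hε
    rw [packingPre0] at h0
    obtain ⟨δ₁, hδ₁⟩ := iInf_lt_iff.mp h0
    obtain ⟨hδ₁pos, hδ₁lt⟩ := iInf_lt_iff.mp hδ₁
    have e1 : ∀ᶠ t in 𝓝[>] (0:ℝ), h t < β := hlim.eventually_lt_const hβ
    have e2 : ∀ᶠ t in 𝓝[>] (0:ℝ), t < γ :=
      (tendsto_id.mono_left nhdsWithin_le_nhds).eventually_lt_const hγ
    have e3 : ∀ᶠ t in 𝓝[>] (0:ℝ), t < δ₁ :=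
      (tendsto_id.mono_left nhdsWithin_le_nhds).eventually_lt_const hδ₁pos
    have e4 : ∀ᶠ t in 𝓝[>] (0:ℝ), t ∈ Ioi (0:ℝ) := self_mem_nhdsWithin
    obtain ⟨t, h1, h2, h3, h4⟩ := (e1.and (e2.and (e3.and e4))).exists
    exact ⟨t, h4, h2, le_trans (packingPre_mono_delta d h h3.le A) hδ₁lt.le, h1.le⟩
  choose T Tpos Tlt TP Th using key
  have hhalf : (0:ℝ≥0∞) < 2⁻¹ := by simp
  let g : ℕ → {t : ℝ // 0 < t} := fun n =>
    Nat.rec (motive := fun _ => {t : ℝ // 0 < t})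
      ⟨T 1 1 1 one_pos one_pos one_pos, Tpos 1 1 1 one_pos one_pos one_pos⟩
      (fun k p =>
        ⟨T (2⁻¹ ^ (k+1)) (h p.1 / 4) p.1 (ENNReal.pow_pos hhalf (k+1))
            (by have := hpos p.1 p.2; linarith) p.2,
         Tpos _ _ _ _ _ _⟩) n
  set δ : ℕ → ℝ := fun k => (g k).1 with hδdef
  have δpos : ∀ k, 0 < δ k := fun k => (g k).2
  have δlt : ∀ k, δ (k+1) < δ k := fun k => Tlt _ _ _ _ _ _
  have δanti : Antitone δ := antitone_nat_of_succ_le (fun k => (δlt k).le)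
  have δP : ∀ k, packingPre d h (δ k) A ≤ 2⁻¹ ^ k := by
    intro k
    cases k with
    | zero => exact (TP 1 1 1 one_pos one_pos one_pos).trans (by simp)
    | succ k => exact TP _ _ _ _ _ _
  have hbsucc : ∀ k, h (δ (k+1)) ≤ h (δ k) / 4 := fun k => Th _ _ _ _ _ _
  set b : ℕ → ℝ := fun k => h (δ k) with hbdef
  have bpos : ∀ k, 0 < b k := fun k => hpos _ (δpos k)
  have bdec : ∀ k, b (k+1) ≤ b k := fun k => (hbsucc k).trans (by have := bpos k; linarith)
  have banti : Antitone b := antitone_nat_of_succ_le bdec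
  have bgeom : ∀ k i, b (i + k) ≤ b k * (1/4 : ℝ) ^ i := by
    intro k i
    induction i with
    | zero => simp
    | succ i ih =>
      have h1 : b (i + 1 + k) ≤ b (i + k) / 4 := by
        have heq : i + 1 + k = (i + k) + 1 := by ring
        rw [heq]; exact hbsucc (i + k)
      have h4p : (0:ℝ) < (1/4:ℝ) ^ i := by positivity
      calc b (i+1+k) ≤ b (i+k)/4 := h1
        _ ≤ (b k * (1/4:ℝ)^i)/4 := by linarith
        _ = b k * (1/4:ℝ)^(i+1) := by ring
  have bsummable : Summable b := by
    refine Summable.of_nonneg_of_le (fun k => (bpos k).le) (fun k => ?_)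
      ((summable_geometric_of_lt_one (r := (1/4:ℝ)) (by norm_num) (by norm_num)).mul_left (b 0))
    simpa using bgeom 0 k
  have btail : ∀ k, (∑' i, b (i + k)) ≤ 2 * b k := by
    intro k
    have hs1 : Summable (fun i => b (i + k)) := (summable_nat_add_iff k).2 bsummable
    have hs2 : Summable (fun i : ℕ => b k * (1/4 : ℝ) ^ i) :=
      (summable_geometric_of_lt_one (by norm_num) (by norm_num)).mul_left (b k)
    have hc : (∑' i, b (i + k)) ≤ ∑' i : ℕ, b k * (1/4:ℝ)^i :=
      Summable.tsum_le_tsum (fun i => bgeom k i) hs1 hs2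
    have hgeo : (∑' i : ℕ, b k * (1/4:ℝ)^i) = b k * (4/3 : ℝ) := by
      rw [tsum_mul_left, tsum_geometric_of_lt_one (by norm_num) (by norm_num)]
      norm_num
    have := bpos k
    rw [hgeo] at hc
    linarith
  set f : ℝ → ℝ := fun t => ∑' k, min (h t) (b k) with hfdef
  have minnn : ∀ t, 0 < t → ∀ k, 0 ≤ min (h t) (b k) :=
    fun t ht k => le_min (hpos t ht).le (bpos k).le
  have fsummable : ∀ t, 0 < t → Summable (fun k => min (h t) (b k)) := fun t ht =>
    Summable.of_nonneg_of_le (minnn t ht) (fun k => min_le_right _ _) bsummable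
  have fsplit : ∀ t, 0 < t → ∀ N : ℕ, f t ≤ N * h t + 2 * b N := by
    intro t ht N
    have hs := fsummable t ht
    have hsN : Summable (fun i => min (h t) (b (i + N))) := (summable_nat_add_iff N).2 hs
    have hbN : Summable (fun i => b (i + N)) := (summable_nat_add_iff N).2 bsummable
    have hEq : (∑ i ∈ Finset.range N, min (h t) (b i)) + ∑' i, min (h t) (b (i + N)) = f t :=
      Summable.sum_add_tsum_nat_add N hs
    have h1 : (∑ i ∈ Finset.range N, min (h t) (b i)) ≤ N * h t := by
      calc (∑ i ∈ Finset.range N, min (h t) (b i)) ≤ ∑ _i ∈ Finset.range N, h t :=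
            Finset.sum_le_sum (fun i _ => min_le_left _ _)
        _ = N * h t := by rw [Finset.sum_const, Finset.card_range, nsmul_eq_mul]
    have h2 : (∑' i, min (h t) (b (i + N))) ≤ 2 * b N :=
      le_trans (Summable.tsum_le_tsum (fun i => min_le_right _ _) hsN hbN) (btail N)
    linarith
  have flb : ∀ t, 0 < t → ∀ N : ℕ, h t ≤ b N → ((N:ℝ) + 1) * h t ≤ f t := by
    intro t ht N hN
    have hs := fsummable t ht
    have h1 : (∑ i ∈ Finset.range (N+1), min (h t) (b i)) ≤ f t :=
      Summable.sum_le_tsum _ (fun i _ => minnn t ht i) hs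
    have h2 : (∑ i ∈ Finset.range (N+1), min (h t) (b i)) = ((N:ℝ)+1) * h t := by
      have hcg : ∀ i ∈ Finset.range (N+1), min (h t) (b i) = h t := by
        intro i hi
        have hle : i ≤ N := by simpa [Nat.lt_succ_iff] using hi
        exact min_eq_left (hN.trans (banti hle))
      rw [Finset.sum_congr rfl hcg, Finset.sum_const, Finset.card_range, nsmul_eq_mul]
      push_cast; ring
    linarith
  have fpos : ∀ t, 0 < t → 0 < f t := by
    intro t ht
    have hle := Summable.le_tsum (fsummable t ht) 0 (fun j _ => minnn t ht j)
    exact lt_of_lt_of_le (lt_min (hpos t ht) (bpos 0)) hle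
  have fdim : IsDimFun f := by
    refine ⟨?_, ?_, fpos, ?_⟩
    · refine continuousOn_tsum (fun k => (continuous_min.comp_continuousOn (hcont.prodMk continuousOn_const) :
          ContinuousOn (fun t => min (h t) (b k)) (Ioi 0)))
        bsummable (fun k t ht => ?_)
      rw [Real.norm_eq_abs, abs_of_nonneg (minnn t ht k)]
      exact min_le_right _ _
    · intro s hs t ht hst
      exact Summable.tsum_le_tsum (fun k => min_le_min (hmono hs ht hst) le_rfl)
        (fsummable s hs) (fsummable t ht)
    · rw [NormedAddCommGroup.tendsto_nhds_zero]
      intro ε hε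
      obtain ⟨N, hN⟩ : ∃ N, b N < ε / 4 :=
        (bsummable.tendsto_atTop_zero.eventually_lt_const (by linarith)).exists
      have hε' : 0 < ε / (2 * N + 2) := by positivity
      filter_upwards [hlim.eventually_lt_const hε', self_mem_nhdsWithin] with t hht ht'
      have ht : (0:ℝ) < t := ht'
      rw [Real.norm_eq_abs, abs_of_pos (fpos t ht)]
      have h1 := fsplit t ht N
      have h2 : (N:ℝ) * h t ≤ (N:ℝ) * (ε / (2*N+2)) :=
        mul_le_mul_of_nonneg_left hht.le (Nat.cast_nonneg N)
      have h3 : (N:ℝ) * (ε / (2*(N:ℝ)+2)) < ε/2 := by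
        have hfrac : (N:ℝ)/(2*(N:ℝ)+2) < 1/2 := by
          rw [div_lt_div_iff₀ (by positivity) (by norm_num)]
          linarith [Nat.cast_nonneg (α := ℝ) N]
        calc (N:ℝ) * (ε/(2*(N:ℝ)+2)) = ε * ((N:ℝ)/(2*(N:ℝ)+2)) := by ring
          _ < ε * (1/2) := by exact mul_lt_mul_of_pos_left hfrac hε
          _ = ε/2 := by ring
      linarith
  have fdlt : DimLT f h := by
    rw [DimLT, NormedAddCommGroup.tendsto_nhds_zero]
    intro ε hε
    obtain ⟨N, hN⟩ := exists_nat_one_div_lt hε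
    filter_upwards [hlim.eventually_lt_const (bpos N), self_mem_nhdsWithin] with t hht ht'
    have ht : (0:ℝ) < t := ht'
    have hfl := flb t ht N hht.le
    have hf0 : 0 < f t := fpos t ht
    have hh0 : 0 < h t := hpos t ht
    rw [Real.norm_eq_abs, abs_of_pos (div_pos hh0 hf0)]
    have hN1 : (0:ℝ) < (N:ℝ) + 1 := by positivity
    have h1 : h t / f t ≤ h t / (((N:ℝ)+1) * h t) :=
      div_le_div_of_nonneg_left hh0.le (mul_pos hN1 hh0) hfl
    have h2 : h t / (((N:ℝ)+1) * h t) = 1/((N:ℝ)+1) := by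
      field_simp
    rw [h2] at h1
    exact lt_of_le_of_lt h1 hN
  -- the pointwise ENNReal estimate
  have claim1 : ∀ t : ℝ, 0 < t →
      ENNReal.ofReal (f t) ≤ 2 * ENNReal.ofReal (h t)
        + ∑' m, (if t < δ m then ENNReal.ofReal (h t) else 0) := by
    intro t ht
    have hex : ∃ k, δ k ≤ t := by
      by_contra hcon
      push_neg at hcon
      obtain ⟨k, hk⟩ := (bsummable.tendsto_atTop_zero.eventually_lt_const (hpos t ht)).exists
      exact absurd (hmono (mem_Ioi.2 ht) (mem_Ioi.2 (δpos k)) (hcon k).le) (not_le.2 hk)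
    set j := Nat.find hex with hjdef
    have hji : δ j ≤ t := Nat.find_spec hex
    have hjlt : ∀ m, m < j → t < δ m := fun m hm => not_le.1 (Nat.find_min hex hm)
    have hiff : ∀ m, (t < δ m) ↔ m < j := by
      intro m
      constructor
      · intro hm; by_contra hc; push_neg at hc
        exact absurd ((δanti hc).trans hji) (not_le.2 hm)
      · exact hjlt m
    have hsum : (∑' m, (if t < δ m then ENNReal.ofReal (h t) else 0))
        = (j : ℝ≥0∞) * ENNReal.ofReal (h t) := by
      have h1 : ∀ m, (if t < δ m then ENNReal.ofReal (h t) else 0)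
          = (if m < j then ENNReal.ofReal (h t) else 0) := by
        intro m; by_cases hm : t < δ m
        · rw [if_pos hm, if_pos ((hiff m).1 hm)]
        · rw [if_neg hm, if_neg (fun hc => hm ((hiff m).2 hc))]
      rw [tsum_congr h1,
        tsum_eq_sum (s := Finset.range j) (fun m hm => if_neg (by simpa using hm))]
      rw [Finset.sum_congr rfl (fun m hm => if_pos (Finset.mem_range.1 hm)),
        Finset.sum_const, Finset.card_range, nsmul_eq_mul]
    have hbj : b j ≤ h t := hmono (mem_Ioi.2 (δpos j)) (mem_Ioi.2 ht) hji
    have hreal : f t ≤ (j : ℝ) * h t + 2 * h t := by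
      have := fsplit t ht j
      linarith
    have hnn : (0:ℝ) ≤ (j:ℝ) * h t := mul_nonneg (Nat.cast_nonneg j) (hpos t ht).le
    calc ENNReal.ofReal (f t) ≤ ENNReal.ofReal ((j:ℝ) * h t + 2 * h t) :=
          ENNReal.ofReal_le_ofReal hreal
      _ = (j : ℝ≥0∞) * ENNReal.ofReal (h t) + 2 * ENNReal.ofReal (h t) := by
          rw [ENNReal.ofReal_add hnn (by have := hpos t ht; linarith),
            ENNReal.ofReal_mul (Nat.cast_nonneg j), ENNReal.ofReal_mul (by norm_num),
            ENNReal.ofReal_natCast, ENNReal.ofReal_ofNat]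
      _ = 2 * ENNReal.ofReal (h t)
            + ∑' m, (if t < δ m then ENNReal.ofReal (h t) else 0) := by
          rw [hsum, add_comm]
  -- finiteness
  have hfin : packingPre0 d f A < ⊤ := by
    have main : packingPre d f (δ 0) A ≤ 4 := by
      refine iSup_le fun c => iSup_le fun r => iSup_le fun s => iSup_le fun hc =>
        iSup_le fun hr => iSup_le fun hδ0 => iSup_le fun hdisj => ?_
      set H : ℕ → ℝ≥0∞ := fun i => ENNReal.ofReal (h (2 * r i)) with hH
      set w : ℕ → ℕ → ℝ≥0∞ := fun m i =>
        Set.indicator s (fun i => if 2 * r i < δ m then H i else 0) i with hw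
      have step1 : (∑' i : s, ENNReal.ofReal (f (2 * r (i:ℕ))))
          = ∑' i, Set.indicator s (fun i => ENNReal.ofReal (f (2 * r i))) i :=
        tsum_subtype s (fun i => ENNReal.ofReal (f (2 * r i)))
      have step2 : ∀ i : ℕ, Set.indicator s (fun i => ENNReal.ofReal (f (2 * r i))) i
          ≤ 2 * Set.indicator s H i + ∑' m, w m i := by
        intro i
        by_cases hi : i ∈ s
        · rw [Set.indicator_of_mem hi, Set.indicator_of_mem hi]
          have hcl := claim1 (2 * r i) (by have := hr i hi; linarith)
          refine hcl.trans (le_of_eq ?_)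
          congr 1
          refine tsum_congr (fun m => ?_)
          rw [hw]
          simp only [Set.indicator_of_mem hi, hH]
        · simp only [Set.indicator_of_notMem hi]
          exact zero_le
      have step3 : (∑' i, Set.indicator s H i) ≤ 1 := by
        have hle := packing_sum_le_pre d h (δ 0) A c r s hc hr hδ0 hdisj
        calc (∑' i, Set.indicator s H i) = ∑' i : s, H (i:ℕ) := (tsum_subtype s H).symm
          _ ≤ packingPre d h (δ 0) A := hle
          _ ≤ 2⁻¹ ^ 0 := δP 0
          _ = 1 := pow_zero _
      have step4 : ∀ m, (∑' i, w m i) ≤ (2:ℝ≥0∞)⁻¹ ^ m := by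
        intro m
        set s' : Set ℕ := s ∩ {i | 2 * r i < δ m} with hs'
        have heq : ∀ i, w m i = Set.indicator s' H i := by
          intro i
          by_cases hi : i ∈ s
          · by_cases hcond : 2 * r i < δ m
            · have hi' : i ∈ s' := ⟨hi, hcond⟩
              rw [hw]
              simp only [Set.indicator_of_mem hi, Set.indicator_of_mem hi', if_pos hcond]
            · have hi' : i ∉ s' := fun hmem => hcond hmem.2
              rw [hw]
              simp only [Set.indicator_of_mem hi, Set.indicator_of_notMem hi', if_neg hcond]
          · have hi' : i ∉ s' := fun hmem => hi hmem.1
            rw [hw]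
            simp only [Set.indicator_of_notMem hi, Set.indicator_of_notMem hi']
        have hle : (∑' i : s', H (i:ℕ)) ≤ packingPre d h (δ m) A :=
          packing_sum_le_pre d h (δ m) A c r s' (fun i hi => hc i hi.1) (fun i hi => hr i hi.1)
            (fun i hi => hi.2) (hdisj.subset Set.inter_subset_left)
        calc (∑' i, w m i) = ∑' i, Set.indicator s' H i := tsum_congr heq
          _ = ∑' i : s', H (i:ℕ) := (tsum_subtype s' H).symm
          _ ≤ packingPre d h (δ m) A := hle
          _ ≤ 2⁻¹ ^ m := δP m
      calc (∑' i : s, ENNReal.ofReal (f (2 * r (i:ℕ))))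
          = ∑' i, Set.indicator s (fun i => ENNReal.ofReal (f (2 * r i))) i := step1
        _ ≤ ∑' i, (2 * Set.indicator s H i + ∑' m, w m i) := ENNReal.tsum_le_tsum step2
        _ = (∑' i, 2 * Set.indicator s H i) + ∑' i, ∑' m, w m i := ENNReal.tsum_add
        _ = 2 * (∑' i, Set.indicator s H i) + ∑' m, ∑' i, w m i := by
            rw [ENNReal.tsum_mul_left, ENNReal.tsum_comm]
        _ ≤ 2 * 1 + ∑' m, (2:ℝ≥0∞)⁻¹ ^ m :=
            add_le_add (mul_le_mul_right step3 2) (ENNReal.tsum_le_tsum step4)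
        _ = 4 := by
            rw [ENNReal.tsum_geometric, ENNReal.one_sub_inv_two, inv_inv]
            norm_num
    have hle4 : packingPre0 d f A ≤ 4 :=
      le_trans (iInf_le_of_le (δ 0) (iInf_le_of_le (δpos 0) le_rfl)) main
    exact lt_of_le_of_lt hle4 (by norm_num)
  exact ⟨f, fdim, fdlt, hfin⟩
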